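/- Let G be a finitely generated group with a fixed finite generating set, equipped with the corresponding word metric, and let H be a subgroup of G. Then the commensurizer of H in G equals the set of all g in G such that the Hausdorff distance between H and the coset gH (as subsets of G with the word metric) is finite. -/

import Mathlib

/-- The word length of `g` with respect to a finite generating set `S`:
the least length of a word in `S ∪ S⁻¹` representing `g`. -/
noncomputable def wlen {G : Type*} [Group G] (S : Finset G) (g : G) : ℕ :=
  sInf {n | ∃ l : List G, l.length = n ∧ (∀ x ∈ l, x ∈ S ∨ x⁻¹ ∈ S) ∧ l.prod = g}

/-- The word metric on `G` with respect to `S`. -/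
noncomputable def wdist {G : Type*} [Group G] (S : Finset G) (g h : G) : ℕ :=
  wlen S (g⁻¹ * h)

open Pointwise

section Aux

variable {G : Type*} [Group G]

private lemma word_inv (S : Finset G) {g : G} {n : ℕ}
    (h : ∃ l : List G, l.length = n ∧ (∀ x ∈ l, x ∈ S ∨ x⁻¹ ∈ S) ∧ l.prod = g) :
    ∃ l : List G, l.length = n ∧ (∀ x ∈ l, x ∈ S ∨ x⁻¹ ∈ S) ∧ l.prod = g⁻¹ := by
  obtain ⟨l, hl, hmem, hprod⟩ := h
  refine ⟨(l.map fun x => x⁻¹).reverse, by simp [hl], ?_, ?_⟩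
  · intro x hx
    simp only [List.mem_reverse, List.mem_map] at hx
    obtain ⟨y, hy, rfl⟩ := hx
    rcases hmem y hy with h | h
    · exact Or.inr (by simpa using h)
    · exact Or.inl h
  · rw [← hprod, List.prod_inv_reverse]

private lemma wlen_inv (S : Finset G) (g : G) : wlen S g⁻¹ = wlen S g := by
  unfold wlen
  congr 1
  ext n
  constructor
  · intro h
    simpa using word_inv S (g := g⁻¹) h
  · intro h
    exact word_inv S h

private lemma exists_word {S : Finset G} (hS : Subgroup.closure (S : Set G) = ⊤) (g : G) :
    ∃ l : List G, (∀ x ∈ l, x ∈ S ∨ x⁻¹ ∈ S) ∧ l.prod = g := by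
  have hg : g ∈ Subgroup.closure (S : Set G) := by rw [hS]; trivial
  induction hg using Subgroup.closure_induction with
  | mem x hx => exact ⟨[x], by simpa using Or.inl hx, by simp⟩
  | one => exact ⟨[], by simp, by simp⟩
  | mul x y hx hy ihx ihy =>
      obtain ⟨l1, h1, p1⟩ := ihx
      obtain ⟨l2, h2, p2⟩ := ihy
      refine ⟨l1 ++ l2, ?_, by simp [p1, p2]⟩
      intro z hz
      rcases List.mem_append.mp hz with h | h
      exacts [h1 z h, h2 z h]
  | inv x hx ih =>
      obtain ⟨l, hm, hp⟩ := ih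
      obtain ⟨l', _, hm', hp'⟩ := word_inv S ⟨l, rfl, hm, hp⟩
      exact ⟨l', hm', hp'⟩

private lemma ball_finite (S : Finset G) (hS : Subgroup.closure (S : Set G) = ⊤) (M : ℕ) :
    {x : G | wlen S x ≤ M}.Finite := by
  classical
  set A : Finset G := S ∪ S.image (fun x => x⁻¹) with hA
  have key : {x : G | wlen S x ≤ M} ⊆
      (fun l : List {y // y ∈ A} => (l.map Subtype.val).prod) '' {l | l.length ≤ M} := by
    intro x hx
    have hne : {n | ∃ l : List G, l.length = n ∧ (∀ y ∈ l, y ∈ S ∨ y⁻¹ ∈ S) ∧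
        l.prod = x}.Nonempty := by
      obtain ⟨l, hm, hp⟩ := exists_word hS x
      exact ⟨l.length, l, rfl, hm, hp⟩
    obtain ⟨l, hlen, hmem, hprod⟩ := Nat.sInf_mem hne
    have hmemA : ∀ y ∈ l, y ∈ A := by
      intro y hy
      rcases hmem y hy with h | h
      · exact Finset.mem_union_left _ h
      · exact Finset.mem_union_right _ (Finset.mem_image.mpr ⟨y⁻¹, h, inv_inv y⟩)
    refine ⟨l.attach.map (fun y => ⟨y.1, hmemA y.1 y.2⟩), ?_, ?_⟩
    · simp only [Set.mem_setOf_eq, List.length_map, List.length_attach]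
      exact hlen.le.trans hx
    · simp only [List.map_map]
      have : (Subtype.val ∘ fun y : {z // z ∈ l} => (⟨y.1, hmemA y.1 y.2⟩ : {y // y ∈ A}))
          = Subtype.val := rfl
      rw [this, List.attach_map_subtype_val, hprod]
  exact ((List.finite_length_le _ M).image _).subset key

private lemma mem_conj (H : Subgroup G) (g x : G) :
    x ∈ ConjAct.toConjAct g • H ↔ g⁻¹ * x * g ∈ H := by
  rw [Subgroup.mem_pointwise_smul_iff_inv_smul_mem, ConjAct.smul_def]
  simp [mul_assoc]

private lemma relindex_conj (A B : Subgroup G) (c : ConjAct G) :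
    (c • A).relIndex (c • B) = A.relIndex B := by
  unfold Subgroup.relIndex
  rw [Subgroup.index_eq_card, Subgroup.index_eq_card]
  exact (Nat.card_congr (Subgroup.quotConjEquiv A B c)).symm

private lemma key_from (S : Finset G) (H : Subgroup G) (g : G)
    (hne : (ConjAct.toConjAct g • H).relIndex H ≠ 0) :
    ∃ M : ℕ, ∀ a ∈ H, ∃ h ∈ H, wlen S (a⁻¹ * (g * h)) ≤ M := by
  set K : Subgroup H := (ConjAct.toConjAct g • H).subgroupOf H with hK
  have hfin : Finite (↥H ⧸ K) := by
    apply Nat.finite_of_card_ne_zero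
    have h1 : K.index ≠ 0 := hne
    rwa [Subgroup.index_eq_card] at h1
  have hwd : ∀ a b : ↥H, @Setoid.r _ (QuotientGroup.leftRel K) a b →
      (QuotientGroup.mk ((a : G) * g) : G ⧸ H) = QuotientGroup.mk ((b : G) * g) := by
    intro a b hab
    rw [QuotientGroup.leftRel_apply, hK, Subgroup.mem_subgroupOf] at hab
    rw [mem_conj] at hab
    rw [QuotientGroup.eq]
    have : ((a : G) * g)⁻¹ * ((b : G) * g) = g⁻¹ * ((a⁻¹ * b : ↥H) : G) * g := by
      push_cast
      group
    rw [this]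
    exact hab
  let f : ↥H ⧸ K → G ⧸ H := fun q =>
    Quotient.liftOn' q (fun a => (QuotientGroup.mk ((a : G) * g) : G ⧸ H)) hwd
  have hrange : (Set.range f).Finite := Set.finite_range f
  refine ⟨hrange.toFinset.sup (fun C => wlen S (Quotient.out C)), ?_⟩
  intro a ha
  set C : G ⧸ H := f (Quotient.mk'' (⟨a, ha⟩ : ↥H)⁻¹) with hCdef
  have hC : C = QuotientGroup.mk (a⁻¹ * g) := rfl
  have hCT : C ∈ hrange.toFinset := hrange.mem_toFinset.mpr ⟨_, rfl⟩
  have hle : wlen S (Quotient.out C) ≤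
      hrange.toFinset.sup (fun C => wlen S (Quotient.out C)) :=
    Finset.le_sup (f := fun C => wlen S (Quotient.out C)) hCT
  have hout : (QuotientGroup.mk (Quotient.out C) : G ⧸ H) = C := Quotient.out_eq C
  have hz : (a⁻¹ * g)⁻¹ * Quotient.out C ∈ H := by
    rw [← QuotientGroup.eq, hout, hC]
  have hz' : g⁻¹ * a * Quotient.out C ∈ H := by
    have : g⁻¹ * a * Quotient.out C = (a⁻¹ * g)⁻¹ * Quotient.out C := by group
    rw [this]
    exact hz
  refine ⟨g⁻¹ * a * Quotient.out C, hz', ?_⟩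
  have : a⁻¹ * (g * (g⁻¹ * a * Quotient.out C)) = Quotient.out C := by group
  rw [this]
  exact hle

private lemma key_to (S : Finset G) (hS : Subgroup.closure (S : Set G) = ⊤)
    (H : Subgroup G) (g : G) (M : ℕ)
    (hb : ∀ a ∈ H, ∃ h ∈ H, wlen S (a⁻¹ * (g * h)) ≤ M) :
    (ConjAct.toConjAct g • H).relIndex H ≠ 0 := by
  set K : Subgroup H := (ConjAct.toConjAct g • H).subgroupOf H with hK
  have hwd : ∀ a b : ↥H, @Setoid.r _ (QuotientGroup.leftRel K) a b →
      (QuotientGroup.mk ((a : G) * g) : G ⧸ H) = QuotientGroup.mk ((b : G) * g) := by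
    intro a b hab
    rw [QuotientGroup.leftRel_apply, hK, Subgroup.mem_subgroupOf] at hab
    rw [mem_conj] at hab
    rw [QuotientGroup.eq]
    have : ((a : G) * g)⁻¹ * ((b : G) * g) = g⁻¹ * ((a⁻¹ * b : ↥H) : G) * g := by
      push_cast
      group
    rw [this]
    exact hab
  let f : ↥H ⧸ K → G ⧸ H := fun q =>
    Quotient.liftOn' q (fun a => (QuotientGroup.mk ((a : G) * g) : G ⧸ H)) hwd
  have hinj : Function.Injective f := by
    intro q q'
    induction q using Quotient.inductionOn' with
    | h a =>
      induction q' using Quotient.inductionOn' with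
      | h b =>
        intro hab
        have hab' : (QuotientGroup.mk ((a : G) * g) : G ⧸ H)
            = QuotientGroup.mk ((b : G) * g) := hab
        rw [QuotientGroup.eq] at hab'
        apply Quotient.sound'
        rw [QuotientGroup.leftRel_apply, hK, Subgroup.mem_subgroupOf, mem_conj]
        have : g⁻¹ * ((a⁻¹ * b : ↥H) : G) * g = ((a : G) * g)⁻¹ * ((b : G) * g) := by
          push_cast
          group
        rw [this]
        exact hab'
  have himg : ∀ q : ↥H ⧸ K,
      f q ∈ (QuotientGroup.mk '' {x : G | wlen S x ≤ M} : Set (G ⧸ H)) := by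
    intro q
    induction q using Quotient.inductionOn' with
    | h a =>
      obtain ⟨h, hh, hwl⟩ := hb (a : G)⁻¹ (H.inv_mem a.2)
      refine ⟨(a : G) * (g * h), by simpa using hwl, ?_⟩
      show (QuotientGroup.mk _ : G ⧸ H) = QuotientGroup.mk ((a : G) * g)
      rw [QuotientGroup.eq]
      have : ((a : G) * (g * h))⁻¹ * ((a : G) * g) = h⁻¹ := by group
      rw [this]
      exact H.inv_mem hh
  have hball : ((QuotientGroup.mk '' {x : G | wlen S x ≤ M}) : Set (G ⧸ H)).Finite :=
    (ball_finite S hS M).image _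
  have : Finite (↥H ⧸ K) := by
    have := hball.to_subtype
    exact Finite.of_injective
      (fun q => (⟨f q, himg q⟩ : (QuotientGroup.mk '' {x : G | wlen S x ≤ M} : Set (G ⧸ H))))
      (fun q q' h => hinj (congrArg Subtype.val h))
  exact Subgroup.index_ne_zero_of_finite (H := K)

end Aux

/-- The commensurizer of a subgroup `H` of a finitely generated group `G` is exactly
the set of `g ∈ G` such that the Hausdorff distance (in the word metric) between `H`
and the coset `gH` is finite. -/
theorem stmt_0 {G : Type*} [Group G] (S : Finset G)
    (hS : Subgroup.closure (S : Set G) = ⊤) (H : Subgroup G) (g : G) :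
    g ∈ Subgroup.Commensurable.commensurator H ↔
      ∃ M : ℕ,
        (∀ a ∈ H, ∃ h ∈ H, wdist S a (g * h) ≤ M) ∧
        (∀ h ∈ H, ∃ a ∈ H, wdist S a (g * h) ≤ M) := by
  rw [Subgroup.Commensurable.commensurator_mem_iff]
  constructor
  · intro hg
    have hg' : Subgroup.Commensurable (ConjAct.toConjAct g⁻¹ • H) H :=
      (Subgroup.Commensurable.commensurator_mem_iff H g⁻¹).mp
        (inv_mem ((Subgroup.Commensurable.commensurator_mem_iff H g).mpr hg))
    obtain ⟨M₁, hM₁⟩ := key_from S H g hg.1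
    obtain ⟨M₂, hM₂⟩ := key_from S H g⁻¹ hg'.1
    refine ⟨max M₁ M₂, ?_, ?_⟩
    · intro a ha
      obtain ⟨h, hh, hw⟩ := hM₁ a ha
      exact ⟨h, hh, hw.trans (le_max_left _ _)⟩
    · intro h hh
      obtain ⟨b, hb, hw⟩ := hM₂ h hh
      refine ⟨b, hb, ?_⟩
      show wlen S (b⁻¹ * (g * h)) ≤ _
      have : b⁻¹ * (g * h) = (h⁻¹ * (g⁻¹ * b))⁻¹ := by group
      rw [this, wlen_inv]
      exact hw.trans (le_max_right _ _)
  · rintro ⟨M, h1, h2⟩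
    have hb1 : ∀ a ∈ H, ∃ h ∈ H, wlen S (a⁻¹ * (g * h)) ≤ M := h1
    have hb2 : ∀ a ∈ H, ∃ h ∈ H, wlen S (a⁻¹ * (g⁻¹ * h)) ≤ M := by
      intro a ha
      obtain ⟨b, hbH, hw⟩ := h2 a ha
      refine ⟨b, hbH, ?_⟩
      have : a⁻¹ * (g⁻¹ * b) = (b⁻¹ * (g * a))⁻¹ := by group
      rw [this, wlen_inv]
      exact hw
    refine ⟨key_to S hS H g M hb1, ?_⟩
    have hY := key_to S hS H g⁻¹ M hb2
    have hsmul : ConjAct.toConjAct g • (ConjAct.toConjAct g⁻¹ • H) = H := by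
      rw [smul_smul, ← map_mul, mul_inv_cancel, map_one, one_smul]
    have heq := relindex_conj (ConjAct.toConjAct g⁻¹ • H) H (ConjAct.toConjAct g)
    rw [hsmul] at heq
    rw [heq]
    exact hY
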